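/- arXiv:gr-qc/0701034 — 2 statements merged into one kernel-verified Lean document; each statement's English description precedes it below -/
import Mathlib

section
/- Fix constants k ∈ ℝ and Λ ≤ 0, and reals u₁ < u₂, v₁ < v₂. Let W ⊆ ℝ² be an open set containing D := [u₁,u₂]×[v₁,v₂], let r, Ω : W → ℝ be C² with r > 0 and Ω > 0, and let T_uv, T_uu, T_vv : W → ℝ be continuous with, on D: T_uu ≥ 0, T_vv ≥ 0, 0 ≤ T_uv ≤ √(T_uu·T_vv), and (writing ν = ∂_u r, λ = ∂_v r): (evol1) ∂_u∂_v r = −kΩ²/(4r) − r⁻¹νλ + 4πr T_uv + (1/4)rΩ²Λ; (const2) ∂_u(Ω⁻²ν) = −4πr T_uu Ω⁻²; (const1) ∂_v(Ω⁻²λ) = −4πr T_vv Ω⁻². Suppose moreover ν > 0 and λ > 0 on D. Define m := (r/2)(k + 4Ω⁻²νλ). Then for every (u,v) ∈ D, m(u,v) ≥ inf { m(u',v') : (u',v') ∈ ({u₂}×[v₁,v₂]) ∪ ([u₁,u₂]×{v₂}) }. -/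
open Real

/-- Partial derivative with respect to the first (`u`) coordinate. -/
noncomputable def pd1 (f : ℝ × ℝ → ℝ) (p : ℝ × ℝ) : ℝ :=
  deriv (fun x => f (x, p.2)) p.1

/-- Partial derivative with respect to the second (`v`) coordinate. -/
noncomputable def pd2 (f : ℝ × ℝ → ℝ) (p : ℝ × ℝ) : ℝ :=
  deriv (fun y => f (p.1, y)) p.2

lemma slice1 {f : ℝ × ℝ → ℝ} {p : ℝ × ℝ} (hf : DifferentiableAt ℝ f p) :
    HasDerivAt (fun x => f (x, p.2)) (fderiv ℝ f p (1, 0)) p.1 := by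
  have h1 : HasDerivAt (fun x : ℝ => (x, p.2)) ((1:ℝ), (0:ℝ)) p.1 :=
    (hasDerivAt_id p.1).prodMk (hasDerivAt_const _ _)
  exact hf.hasFDerivAt.comp_hasDerivAt p.1 h1

lemma slice2 {f : ℝ × ℝ → ℝ} {p : ℝ × ℝ} (hf : DifferentiableAt ℝ f p) :
    HasDerivAt (fun y => f (p.1, y)) (fderiv ℝ f p (0, 1)) p.2 := by
  have h1 : HasDerivAt (fun y : ℝ => (p.1, y)) ((0:ℝ), (1:ℝ)) p.2 :=
    (hasDerivAt_const _ _).prodMk (hasDerivAt_id p.2)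
  exact hf.hasFDerivAt.comp_hasDerivAt p.2 h1

lemma pd1_eq {f : ℝ × ℝ → ℝ} {p : ℝ × ℝ} (hf : DifferentiableAt ℝ f p) :
    pd1 f p = fderiv ℝ f p (1, 0) := (slice1 hf).deriv

lemma pd2_eq {f : ℝ × ℝ → ℝ} {p : ℝ × ℝ} (hf : DifferentiableAt ℝ f p) :
    pd2 f p = fderiv ℝ f p (0, 1) := (slice2 hf).deriv

lemma slice1' {f : ℝ × ℝ → ℝ} {p : ℝ × ℝ} (hf : DifferentiableAt ℝ f p) :
    HasDerivAt (fun x => f (x, p.2)) (pd1 f p) p.1 := by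
  rw [pd1_eq hf]; exact slice1 hf

lemma slice2' {f : ℝ × ℝ → ℝ} {p : ℝ × ℝ} (hf : DifferentiableAt ℝ f p) :
    HasDerivAt (fun y => f (p.1, y)) (pd2 f p) p.2 := by
  rw [pd2_eq hf]; exact slice2 hf

lemma lineDeriv' {f : ℝ × ℝ → ℝ} {p d : ℝ × ℝ} (hf : DifferentiableAt ℝ f p) :
    HasDerivAt (fun t : ℝ => f (p + t • d)) (fderiv ℝ f p d) 0 := by
  have h1 : HasDerivAt (fun t : ℝ => p + t • d) d 0 := by
    simpa using ((hasDerivAt_id (0:ℝ)).smul_const d).const_add p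
  have h2 : HasFDerivAt f (fderiv ℝ f p) (p + (0:ℝ) • d) := by
    simpa using hf.hasFDerivAt
  exact h2.comp_hasDerivAt 0 h1

lemma fderiv_dir {f : ℝ × ℝ → ℝ} {p : ℝ × ℝ} (d : ℝ × ℝ) :
    fderiv ℝ f p d = d.1 * fderiv ℝ f p (1, 0) + d.2 * fderiv ℝ f p (0, 1) := by
  have hd : d = d.1 • ((1:ℝ), (0:ℝ)) + d.2 • ((0:ℝ), (1:ℝ)) := by
    ext <;> simp
  rw [hd, map_add, map_smul, map_smul]
  simp [smul_eq_mul]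

lemma amgm {a b c Tu Tv : ℝ} (ha : 0 < a) (hb : 0 < b) (hTu : 0 ≤ Tu) (hTv : 0 ≤ Tv)
    (hc : c ≤ Real.sqrt (Tu * Tv)) : 2 * (a * b * c) ≤ b ^ 2 * Tu + a ^ 2 * Tv := by
  have hs := Real.sqrt_nonneg Tu
  have ht := Real.sqrt_nonneg Tv
  have h1 : Real.sqrt (Tu * Tv) = Real.sqrt Tu * Real.sqrt Tv := Real.sqrt_mul hTu _
  have h2 : Real.sqrt Tu ^ 2 = Tu := Real.sq_sqrt hTu
  have h3 : Real.sqrt Tv ^ 2 = Tv := Real.sq_sqrt hTv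
  nlinarith [sq_nonneg (b * Real.sqrt Tu - a * Real.sqrt Tv), mul_pos ha hb, hc, h1, h2, h3]

set_option maxHeartbeats 2000000 in
/-- Proposition 9.2 (otherprop) in characteristic-rectangle form: for `Λ ≤ 0`, under the
Vlasov energy conditions and `ν, λ > 0`, the Hawking mass at any point of the rectangle
dominates its infimum over the future boundary of the rectangle. -/
theorem hawking_mass_bounded_below_in_past
    (k Λ : ℝ) (hΛ : Λ ≤ 0) (u₁ u₂ v₁ v₂ : ℝ) (hu : u₁ < u₂) (hv : v₁ < v₂)
    (W : Set (ℝ × ℝ)) (hW : IsOpen W)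
    (hDW : Set.Icc u₁ u₂ ×ˢ Set.Icc v₁ v₂ ⊆ W)
    (r Ω Tuv Tuu Tvv : ℝ × ℝ → ℝ)
    (hr : ContDiffOn ℝ 2 r W) (hΩ : ContDiffOn ℝ 2 Ω W)
    (hrpos : ∀ p ∈ W, 0 < r p) (hΩpos : ∀ p ∈ W, 0 < Ω p)
    (hTuvcont : ContinuousOn Tuv W) (hTuucont : ContinuousOn Tuu W)
    (hTvvcont : ContinuousOn Tvv W)
    (hTuu : ∀ p ∈ Set.Icc u₁ u₂ ×ˢ Set.Icc v₁ v₂, 0 ≤ Tuu p)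
    (hTvv : ∀ p ∈ Set.Icc u₁ u₂ ×ˢ Set.Icc v₁ v₂, 0 ≤ Tvv p)
    (hTuv : ∀ p ∈ Set.Icc u₁ u₂ ×ˢ Set.Icc v₁ v₂,
      0 ≤ Tuv p ∧ Tuv p ≤ Real.sqrt (Tuu p * Tvv p))
    (hevol1 : ∀ p ∈ W, pd1 (pd2 r) p =
      -(k * Ω p ^ 2) / (4 * r p) - (r p)⁻¹ * pd1 r p * pd2 r p
        + 4 * π * r p * Tuv p + (1 / 4) * r p * Ω p ^ 2 * Λ)
    (hconst2 : ∀ p ∈ W, pd1 (fun q => (Ω q ^ 2)⁻¹ * pd1 r q) p =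
      -(4 * π * r p * Tuu p * (Ω p ^ 2)⁻¹))
    (hconst1 : ∀ p ∈ W, pd2 (fun q => (Ω q ^ 2)⁻¹ * pd2 r q) p =
      -(4 * π * r p * Tvv p * (Ω p ^ 2)⁻¹))
    (hnu : ∀ p ∈ Set.Icc u₁ u₂ ×ˢ Set.Icc v₁ v₂, 0 < pd1 r p)
    (hlam : ∀ p ∈ Set.Icc u₁ u₂ ×ˢ Set.Icc v₁ v₂, 0 < pd2 r p) :
    ∀ p ∈ Set.Icc u₁ u₂ ×ˢ Set.Icc v₁ v₂,
      (fun q => r q / 2 * (k + 4 * (Ω q ^ 2)⁻¹ * pd1 r q * pd2 r q)) p ≥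
        sInf ((fun q => r q / 2 * (k + 4 * (Ω q ^ 2)⁻¹ * pd1 r q * pd2 r q)) ''
          (({u₂} : Set ℝ) ×ˢ Set.Icc v₁ v₂ ∪ Set.Icc u₁ u₂ ×ˢ ({v₂} : Set ℝ))) := by
  set m := fun q : ℝ × ℝ => r q / 2 * (k + 4 * (Ω q ^ 2)⁻¹ * pd1 r q * pd2 r q) with hmdef
  intro p hp
  set D := Set.Icc u₁ u₂ ×ˢ Set.Icc v₁ v₂ with hDdef
  set S := ({u₂} : Set ℝ) ×ˢ Set.Icc v₁ v₂ ∪ Set.Icc u₁ u₂ ×ˢ ({v₂} : Set ℝ) with hSdef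
  have hWnhds : ∀ q ∈ W, W ∈ nhds q := fun q hq => hW.mem_nhds hq
  -- differentiability infrastructure
  have hrW : DifferentiableOn ℝ r W := hr.differentiableOn (by norm_num)
  have hrd : ∀ q ∈ W, DifferentiableAt ℝ r q :=
    fun q hq => (hrW q hq).differentiableAt (hWnhds q hq)
  have hΩd : ∀ q ∈ W, DifferentiableAt ℝ Ω q :=
    fun q hq => ((hΩ.differentiableOn (by norm_num)) q hq).differentiableAt (hWnhds q hq)
  have hF : ContDiffOn ℝ 1 (fderiv ℝ r) W := hr.fderiv_of_isOpen hW (by norm_num)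
  have hFd : ∀ q ∈ W, DifferentiableAt ℝ (fderiv ℝ r) q :=
    fun q hq => ((hF.differentiableOn (by norm_num)) q hq).differentiableAt (hWnhds q hq)
  have hNd : ∀ q ∈ W, DifferentiableAt ℝ (fun q' => fderiv ℝ r q' (1, 0)) q :=
    fun q hq => (hFd q hq).clm_apply (differentiableAt_const _)
  have hLd : ∀ q ∈ W, DifferentiableAt ℝ (fun q' => fderiv ℝ r q' (0, 1)) q :=
    fun q hq => (hFd q hq).clm_apply (differentiableAt_const _)
  have hpd1rN : ∀ q ∈ W, pd1 r q = (fun q' => fderiv ℝ r q' (1, 0)) q :=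
    fun q hq => pd1_eq (hrd q hq)
  have hpd2rL : ∀ q ∈ W, pd2 r q = (fun q' => fderiv ℝ r q' (0, 1)) q :=
    fun q hq => pd2_eq (hrd q hq)
  have hevN : ∀ q ∈ W, pd1 r =ᶠ[nhds q] (fun q' => fderiv ℝ r q' (1, 0)) :=
    fun q hq => Filter.eventuallyEq_of_mem (hWnhds q hq) hpd1rN
  have hevL : ∀ q ∈ W, pd2 r =ᶠ[nhds q] (fun q' => fderiv ℝ r q' (0, 1)) :=
    fun q hq => Filter.eventuallyEq_of_mem (hWnhds q hq) hpd2rL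
  have hpd1rd : ∀ q ∈ W, DifferentiableAt ℝ (pd1 r) q :=
    fun q hq => (hNd q hq).congr_of_eventuallyEq (hevN q hq)
  have hpd2rd : ∀ q ∈ W, DifferentiableAt ℝ (pd2 r) q :=
    fun q hq => (hLd q hq).congr_of_eventuallyEq (hevL q hq)
  have hinvd : ∀ q ∈ W, DifferentiableAt ℝ (fun q' => (Ω q' ^ 2)⁻¹) q :=
    fun q hq => ((hΩd q hq).pow 2).inv (pow_ne_zero 2 (hΩpos q hq).ne')
  have hhd : ∀ q ∈ W, DifferentiableAt ℝ (fun q' => (Ω q' ^ 2)⁻¹ * pd1 r q') q :=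
    fun q hq => (hinvd q hq).mul (hpd1rd q hq)
  have hgd : ∀ q ∈ W, DifferentiableAt ℝ (fun q' => (Ω q' ^ 2)⁻¹ * pd2 r q') q :=
    fun q hq => (hinvd q hq).mul (hpd2rd q hq)
  have hmd : ∀ q ∈ W, DifferentiableAt ℝ m q := by
    intro q hq
    have h1 : DifferentiableAt ℝ (fun q' => r q' / 2) q := by
      simpa [div_eq_mul_inv] using (hrd q hq).mul_const ((2:ℝ)⁻¹)
    have h2 : DifferentiableAt ℝ (fun q' => k + 4 * (Ω q' ^ 2)⁻¹ * pd1 r q' * pd2 r q') q :=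
      ((((hinvd q hq).const_mul (4:ℝ)).mul (hpd1rd q hq)).mul (hpd2rd q hq)).const_add k
    exact h1.mul h2
  have hmc : ContinuousOn m W := fun q hq => ((hmd q hq).continuousAt).continuousWithinAt
  -- symmetry of second derivatives
  have hsymm : ∀ q ∈ W, pd2 (pd1 r) q = pd1 (pd2 r) q := by
    intro q hq
    have hsym := (hr.contDiffAt (hWnhds q hq)).isSymmSndFDerivAt (by norm_num)
    have e1 : pd2 (pd1 r) q = pd2 (fun q' => fderiv ℝ r q' (1, 0)) q := by
      unfold pd2
      apply Filter.EventuallyEq.deriv_eq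
      have hmem : {y : ℝ | (q.1, y) ∈ W} ∈ nhds q.2 :=
        (hW.preimage (Continuous.prodMk_right q.1)).mem_nhds hq
      filter_upwards [hmem] with y hy
      exact hpd1rN _ hy
    have e2 : pd1 (pd2 r) q = pd1 (fun q' => fderiv ℝ r q' (0, 1)) q := by
      unfold pd1
      apply Filter.EventuallyEq.deriv_eq
      have hmem : {x : ℝ | (x, q.2) ∈ W} ∈ nhds q.1 :=
        (hW.preimage (Continuous.prodMk_left q.2)).mem_nhds hq
      filter_upwards [hmem] with x hx
      exact hpd2rL _ hx
    rw [e1, e2, pd2_eq (hNd q hq), pd1_eq (hLd q hq)]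
    have eN : fderiv ℝ (fun q' => fderiv ℝ r q' (1, 0)) q
        = (fderiv ℝ (fderiv ℝ r) q).flip ((1:ℝ), (0:ℝ)) := by
      have := fderiv_clm_apply (hFd q hq) (differentiableAt_const ((1:ℝ), (0:ℝ)))
      simpa using this
    have eL : fderiv ℝ (fun q' => fderiv ℝ r q' (0, 1)) q
        = (fderiv ℝ (fderiv ℝ r) q).flip ((0:ℝ), (1:ℝ)) := by
      have := fderiv_clm_apply (hFd q hq) (differentiableAt_const ((0:ℝ), (1:ℝ)))
      simpa using this
    rw [eN, eL]
    simpa using hsym (0, 1) (1, 0)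
  -- the two formulas for the derivatives of the mass
  have key1 : ∀ q ∈ W, pd1 m q =
      8 * π * r q ^ 2 * (Ω q ^ 2)⁻¹ * (pd1 r q * Tuv q - pd2 r q * Tuu q)
        + r q ^ 2 * pd1 r q * Λ / 2 := by
    intro q hq
    have Hr : HasDerivAt (fun x => r (x, q.2)) (pd1 r q) q.1 := slice1' (hrd q hq)
    have Hh : HasDerivAt (fun x => (fun q' => (Ω q' ^ 2)⁻¹ * pd1 r q') (x, q.2))
        (pd1 (fun q' => (Ω q' ^ 2)⁻¹ * pd1 r q') q) q.1 := slice1' (hhd q hq)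
    have Hl : HasDerivAt (fun x => pd2 r (x, q.2)) (pd1 (pd2 r) q) q.1 := slice1' (hpd2rd q hq)
    have Hm : HasDerivAt (fun x => m (x, q.2))
        (pd1 r q / 2 * (k + 4 * ((Ω q ^ 2)⁻¹ * pd1 r q) * pd2 r q)
          + r q / 2 * (4 * pd1 (fun q' => (Ω q' ^ 2)⁻¹ * pd1 r q') q * pd2 r q
            + 4 * ((Ω q ^ 2)⁻¹ * pd1 r q) * pd1 (pd2 r) q)) q.1 := by
      have hfeq : (fun x => m (x, q.2))
          = fun x => r (x, q.2) / 2
              * (k + 4 * ((Ω (x, q.2) ^ 2)⁻¹ * pd1 r (x, q.2)) * pd2 r (x, q.2)) := by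
        funext x; simp only [hmdef]; ring
      rw [hfeq]
      exact (Hr.div_const 2).mul (((Hh.const_mul 4).mul Hl).const_add k)
    have e1 : pd1 m q = _ := Hm.deriv
    rw [e1, hconst2 q hq, hevol1 q hq]
    have hΩ0 : Ω q ≠ 0 := (hΩpos q hq).ne'
    have hr0 : r q ≠ 0 := (hrpos q hq).ne'
    field_simp
    ring
  have key2 : ∀ q ∈ W, pd2 m q =
      8 * π * r q ^ 2 * (Ω q ^ 2)⁻¹ * (pd2 r q * Tuv q - pd1 r q * Tvv q)
        + r q ^ 2 * pd2 r q * Λ / 2 := by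
    intro q hq
    have Hr : HasDerivAt (fun y => r (q.1, y)) (pd2 r q) q.2 := slice2' (hrd q hq)
    have Hg : HasDerivAt (fun y => (fun q' => (Ω q' ^ 2)⁻¹ * pd2 r q') (q.1, y))
        (pd2 (fun q' => (Ω q' ^ 2)⁻¹ * pd2 r q') q) q.2 := slice2' (hgd q hq)
    have Hn : HasDerivAt (fun y => pd1 r (q.1, y)) (pd2 (pd1 r) q) q.2 := slice2' (hpd1rd q hq)
    have Hm : HasDerivAt (fun y => m (q.1, y))
        (pd2 r q / 2 * (k + 4 * ((Ω q ^ 2)⁻¹ * pd2 r q) * pd1 r q)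
          + r q / 2 * (4 * pd2 (fun q' => (Ω q' ^ 2)⁻¹ * pd2 r q') q * pd1 r q
            + 4 * ((Ω q ^ 2)⁻¹ * pd2 r q) * pd2 (pd1 r) q)) q.2 := by
      have hfeq : (fun y => m (q.1, y))
          = fun y => r (q.1, y) / 2
              * (k + 4 * ((Ω (q.1, y) ^ 2)⁻¹ * pd2 r (q.1, y)) * pd1 r (q.1, y)) := by
        funext y; simp only [hmdef]; ring
      rw [hfeq]
      exact (Hr.div_const 2).mul (((Hg.const_mul 4).mul Hn).const_add k)
    have e1 : pd2 m q = _ := Hm.deriv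
    rw [e1, hconst1 q hq, hsymm q hq, hevol1 q hq]
    have hΩ0 : Ω q ≠ 0 := (hΩpos q hq).ne'
    have hr0 : r q ≠ 0 := (hrpos q hq).ne'
    field_simp
    ring
  -- the combined (past-pointing) inequality
  have key3 : ∀ q ∈ D, pd2 r q * pd1 m q + pd1 r q * pd2 m q ≤ 0 := by
    intro q hq
    have hqW : q ∈ W := hDW hq
    rw [key1 q hqW, key2 q hqW]
    have hν := hnu q hq
    have hlm := hlam q hq
    have hR := hrpos q hqW
    have hΩq := hΩpos q hqW
    have hinv : (0:ℝ) < (Ω q ^ 2)⁻¹ := inv_pos.2 (pow_pos hΩq 2)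
    have hTuu' := hTuu q hq
    have hTvv' := hTvv q hq
    have hTuv' := (hTuv q hq).2
    have hsq : Real.sqrt (Tuu q * Tvv q) = Real.sqrt (Tuu q) * Real.sqrt (Tvv q) :=
      Real.sqrt_mul hTuu' _
    have hsTuu : Real.sqrt (Tuu q) ^ 2 = Tuu q := Real.sq_sqrt hTuu'
    have hsTvv : Real.sqrt (Tvv q) ^ 2 = Tvv q := Real.sq_sqrt hTvv'
    have hquad : 2 * (pd1 r q * pd2 r q * Tuv q)
        ≤ pd2 r q ^ 2 * Tuu q + pd1 r q ^ 2 * Tvv q :=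
      amgm hν hlm hTuu' hTvv' hTuv'
    have hcoef : (0:ℝ) < 8 * π * r q ^ 2 * (Ω q ^ 2)⁻¹ :=
      mul_pos (mul_pos (mul_pos (by norm_num : (0:ℝ) < 8) Real.pi_pos) (pow_pos hR 2)) hinv
    have hfirst : 8 * π * r q ^ 2 * (Ω q ^ 2)⁻¹
        * (2 * (pd1 r q * pd2 r q * Tuv q) - (pd2 r q ^ 2 * Tuu q + pd1 r q ^ 2 * Tvv q)) ≤ 0 :=
      mul_nonpos_of_nonneg_of_nonpos hcoef.le (by linarith)
    have hsecond : r q ^ 2 * (pd1 r q * pd2 r q) * Λ ≤ 0 := by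
      have : (0:ℝ) ≤ r q ^ 2 * (pd1 r q * pd2 r q) :=
        mul_nonneg (sq_nonneg _) (mul_pos hν hlm).le
      exact mul_nonpos_of_nonneg_of_nonpos this hΛ
    have heq : pd2 r q * (8 * π * r q ^ 2 * (Ω q ^ 2)⁻¹ * (pd1 r q * Tuv q - pd2 r q * Tuu q)
          + r q ^ 2 * pd1 r q * Λ / 2)
        + pd1 r q * (8 * π * r q ^ 2 * (Ω q ^ 2)⁻¹ * (pd2 r q * Tuv q - pd1 r q * Tvv q)
          + r q ^ 2 * pd2 r q * Λ / 2)
        = 8 * π * r q ^ 2 * (Ω q ^ 2)⁻¹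
            * (2 * (pd1 r q * pd2 r q * Tuv q) - (pd2 r q ^ 2 * Tuu q + pd1 r q ^ 2 * Tvv q))
          + r q ^ 2 * (pd1 r q * pd2 r q) * Λ := by ring
    rw [heq]
    exact add_nonpos hfirst hsecond
  -- set-theoretic facts
  have hSD : S ⊆ D := by
    intro q hq
    rcases hq with hq | hq
    · exact ⟨by rw [Set.mem_singleton_iff.1 hq.1]; exact ⟨hu.le, le_rfl⟩, hq.2⟩
    · exact ⟨hq.1, by rw [Set.mem_singleton_iff.1 hq.2]; exact ⟨hv.le, le_rfl⟩⟩
  have hDcomp : IsCompact D := isCompact_Icc.prod isCompact_Icc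
  have hScomp : IsCompact S :=
    (isCompact_singleton.prod isCompact_Icc).union (isCompact_Icc.prod isCompact_singleton)
  have hSne : S.Nonempty := ⟨(u₂, v₂), Or.inl ⟨rfl, ⟨hv.le, le_rfl⟩⟩⟩
  have hbdd : BddBelow (m '' S) :=
    ((hScomp.image_of_continuousOn (hmc.mono (hSD.trans hDW))).bddBelow)
  -- the ε-perturbation argument
  rw [ge_iff_le]
  apply le_of_forall_pos_le_add
  intro ε hε
  set C := (u₂ + v₂) - (u₁ + v₁) with hCdef
  have hC : 0 < C := by simp only [hCdef]; linarith
  set δ := ε / C with hδdef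
  have hδ : 0 < δ := div_pos hε hC
  set g := fun q : ℝ × ℝ => m q - δ * (q.1 + q.2) with hgdef
  have hgc : ContinuousOn g D := by
    apply ContinuousOn.sub (hmc.mono hDW)
    exact (continuous_const.mul (continuous_fst.add continuous_snd)).continuousOn
  obtain ⟨q₀, hq₀D, hmin⟩ := hDcomp.exists_isMinOn ⟨(u₁, v₁), ⟨⟨le_rfl, hu.le⟩, ⟨le_rfl, hv.le⟩⟩⟩ hgc
  have hq₀W : q₀ ∈ W := hDW hq₀D
  -- the minimum is on the future boundary
  have hq₀S : q₀ ∈ S := by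
    by_contra hq₀S
    have h1 : q₀.1 < u₂ := by
      rcases lt_or_eq_of_le hq₀D.1.2 with h | h
      · exact h
      · exact absurd (Or.inl ⟨h, hq₀D.2⟩) hq₀S
    have h2 : q₀.2 < v₂ := by
      rcases lt_or_eq_of_le hq₀D.2.2 with h | h
      · exact h
      · exact absurd (Or.inr ⟨hq₀D.1, h⟩) hq₀S
    have hν := hnu q₀ hq₀D
    have hlm := hlam q₀ hq₀D
    set d : ℝ × ℝ := ((pd1 r q₀)⁻¹, (pd2 r q₀)⁻¹) with hddef
    have hd1 : 0 < d.1 := inv_pos.2 hν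
    have hd2 : 0 < d.2 := inv_pos.2 hlm
    -- derivative of g along the future direction is negative
    have hdir : fderiv ℝ m q₀ d = d.1 * pd1 m q₀ + d.2 * pd2 m q₀ := by
      rw [fderiv_dir d, pd1_eq (hmd q₀ hq₀W), pd2_eq (hmd q₀ hq₀W)]
    have hdirneg : fderiv ℝ m q₀ d ≤ 0 := by
      rw [hdir]
      have h3 := key3 q₀ hq₀D
      have e : d.1 * pd1 m q₀ + d.2 * pd2 m q₀
          = (pd1 r q₀ * pd2 r q₀)⁻¹ * (pd2 r q₀ * pd1 m q₀ + pd1 r q₀ * pd2 m q₀) := by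
        simp only [hddef]
        field_simp
      rw [e]
      exact mul_nonpos_of_nonneg_of_nonpos (inv_nonneg.2 (mul_pos hν hlm).le) h3
    set c : ℝ := fderiv ℝ m q₀ d - δ * (d.1 + d.2) with hcdef
    have hc : c < 0 := by
      have : 0 < δ * (d.1 + d.2) := mul_pos hδ (add_pos hd1 hd2)
      simp only [hcdef]; linarith
    have hφ : HasDerivAt (fun t : ℝ => g (q₀ + t • d)) c 0 := by
      have hA : HasDerivAt (fun t : ℝ => m (q₀ + t • d)) (fderiv ℝ m q₀ d) 0 :=
        lineDeriv' (hmd q₀ hq₀W)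
      have hB : HasDerivAt (fun t : ℝ => δ * ((q₀ + t • d).1 + (q₀ + t • d).2))
          (δ * (d.1 + d.2)) 0 := by
        have : HasDerivAt (fun t : ℝ => δ * ((q₀.1 + t * d.1) + (q₀.2 + t * d.2)))
            (δ * (d.1 + d.2)) 0 := by
          have h' := ((((hasDerivAt_id (0:ℝ)).mul_const d.1).const_add q₀.1).add
            (((hasDerivAt_id (0:ℝ)).mul_const d.2).const_add q₀.2)).const_mul δ
          simpa using h'
        convert this using 2 with t
        all_goals simp [Prod.ext_iff]
      exact hA.sub hB
    -- pick a small positive t along the direction, still inside D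
    have ht0 : 0 < min ((u₂ - q₀.1) / d.1) ((v₂ - q₀.2) / d.2) := by
      apply lt_min (div_pos (by linarith) hd1) (div_pos (by linarith) hd2)
    have hslope := hasDerivAt_iff_tendsto_slope.1 hφ
    have hev : ∀ᶠ t in nhdsWithin (0:ℝ) (Set.Ioi 0), slope (fun t : ℝ => g (q₀ + t • d)) 0 t < 0 := by
      have h' : ∀ᶠ t in nhdsWithin (0:ℝ) {(0:ℝ)}ᶜ, slope (fun t : ℝ => g (q₀ + t • d)) 0 t < 0 :=
        hslope.eventually_lt_const hc
      exact h'.filter_mono (nhdsWithin_mono 0 (fun t ht => ne_of_gt ht))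
    have hevD : ∀ᶠ t in nhdsWithin (0:ℝ) (Set.Ioi 0), q₀ + t • d ∈ D := by
      have hIoo : Set.Ioo (0:ℝ) (min ((u₂ - q₀.1) / d.1) ((v₂ - q₀.2) / d.2))
          ∈ nhdsWithin (0:ℝ) (Set.Ioi 0) := Ioo_mem_nhdsGT_of_mem ⟨le_rfl, ht0⟩
      filter_upwards [hIoo] with t ht
      have ht1 : t * d.1 < u₂ - q₀.1 := by
        have := ht.2.trans_le (min_le_left _ _)
        calc t * d.1 < ((u₂ - q₀.1) / d.1) * d.1 := by
              exact mul_lt_mul_of_pos_right this hd1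
          _ = u₂ - q₀.1 := by field_simp
      have ht2 : t * d.2 < v₂ - q₀.2 := by
        have := ht.2.trans_le (min_le_right _ _)
        calc t * d.2 < ((v₂ - q₀.2) / d.2) * d.2 := by
              exact mul_lt_mul_of_pos_right this hd2
          _ = v₂ - q₀.2 := by field_simp
      have htd1 : 0 ≤ t * d.1 := le_of_lt (mul_pos ht.1 hd1)
      have htd2 : 0 ≤ t * d.2 := le_of_lt (mul_pos ht.1 hd2)
      constructor
      · constructor
        · simp only [Prod.fst_add, Prod.smul_fst, smul_eq_mul]
          have := hq₀D.1.1; linarith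
        · simp only [Prod.fst_add, Prod.smul_fst, smul_eq_mul]
          linarith
      · constructor
        · simp only [Prod.snd_add, Prod.smul_snd, smul_eq_mul]
          have := hq₀D.2.1; linarith
        · simp only [Prod.snd_add, Prod.smul_snd, smul_eq_mul]
          linarith
    obtain ⟨t, ⟨hts, htD⟩, htpos⟩ := ((hev.and hevD).and self_mem_nhdsWithin).exists
    have htpos' : (0:ℝ) < t := htpos
    have hlt : g (q₀ + t • d) < g q₀ := by
      have hs := hts
      rw [slope_def_field] at hs
      have h0 : (fun t : ℝ => g (q₀ + t • d)) 0 = g q₀ := by simp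
      -- slope = (f t - f 0)/(t - 0) < 0 with t > 0
      have : (g (q₀ + t • d) - g q₀) / t < 0 := by
        simpa [h0] using hs
      have := (div_neg_iff.1 this)
      rcases this with ⟨hnum, _⟩ | ⟨_, hden⟩
      · linarith
      · linarith
    exact absurd (isMinOn_iff.1 hmin _ htD) (not_le.2 hlt)
  -- conclude
  have h1 : sInf (m '' S) ≤ m q₀ := csInf_le hbdd ⟨q₀, hq₀S, rfl⟩
  have h2 : g q₀ ≤ g p := isMinOn_iff.1 hmin p hp
  have hps : u₁ + v₁ ≤ p.1 + p.2 := add_le_add hp.1.1 hp.2.1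
  have hqs : q₀.1 + q₀.2 ≤ u₂ + v₂ := add_le_add hq₀D.1.2 hq₀D.2.2
  have hδC : δ * C = ε := by
    simp only [hδdef]
    field_simp
  have : m q₀ - δ * (q₀.1 + q₀.2) ≤ m p - δ * (p.1 + p.2) := h2
  have hmono : δ * (q₀.1 + q₀.2) - δ * (p.1 + p.2) ≤ δ * C := by
    rw [← mul_sub]
    apply mul_le_mul_of_nonneg_left _ hδ.le
    simp only [hCdef]; linarith
  linarith
end

section
/- Let G be a symmetric positive-definite 2×2 real matrix, and let r, Ω, δ be positive reals, and F ≥ 0, X ≥ 0. Let f : (0,∞)×ℝ² → [0,∞) be measurable with f ≤ F everywhere and f(p,q) = 0 whenever r⁴·⟨q, G q⟩ > X. Define (as integrals with values in [0,∞], over (0,∞)×ℝ²) N^u := ∫ r² f(p,q) √(det G) dp dq and T_vv := (Ω⁴/4) ∫ r² p f(p,q) √(det G) dp dq. Then N^u ≤ 4·Ω⁻⁴·δ⁻¹·T_vv + π·F·X·r⁻²·δ. -/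
open MeasureTheory Matrix Real

lemma quad_continuous' (G : Matrix (Fin 2) (Fin 2) ℝ) :
    Continuous fun q : Fin 2 → ℝ => q ⬝ᵥ G.mulVec q := by
  simp only [dotProduct, mulVec]
  fun_prop

lemma euclid_ball_vol' (c : ℝ) (hc : 0 ≤ c) :
    volume {y : Fin 2 → ℝ | y ⬝ᵥ y ≤ c} = ENNReal.ofReal (π * c) := by
  have hcont : Continuous fun y : Fin 2 → ℝ => y ⬝ᵥ y := by
    simp only [dotProduct]; fun_prop
  have hDmeas : MeasurableSet {y : Fin 2 → ℝ | y ⬝ᵥ y ≤ c} :=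
    (isClosed_le hcont continuous_const).measurableSet
  have hpres := EuclideanSpace.volume_preserving_symm_measurableEquiv_toLp (Fin 2)
  rw [← hpres.measure_preimage hDmeas.nullMeasurableSet]
  have hset : (MeasurableEquiv.toLp 2 (Fin 2 → ℝ)).symm ⁻¹' {y : Fin 2 → ℝ | y ⬝ᵥ y ≤ c}
      = Metric.closedBall (0 : EuclideanSpace ℝ (Fin 2)) (Real.sqrt c) := by
    ext z
    simp only [Set.mem_preimage, Set.mem_setOf_eq, Metric.mem_closedBall, dist_zero_right,
      EuclideanSpace.norm_eq, MeasurableEquiv.toLp_symm_apply]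
    rw [← Real.sqrt_le_sqrt_iff hc]
    congr! 2
    simp [dotProduct, sq]
  rw [hset, EuclideanSpace.volume_closedBall]
  simp only [Fintype.card_fin]
  rw [show ((2:ℕ):ℝ)/2 + 1 = 2 by norm_num, Real.Gamma_two,
    ← ENNReal.ofReal_pow (Real.sqrt_nonneg c), Real.sq_sqrt hc,
    ← ENNReal.ofReal_mul hc]
  rw [Real.sq_sqrt pi_nonneg]
  ring_nf

section
open scoped MatrixOrder

lemma ellipse_vol' (G : Matrix (Fin 2) (Fin 2) ℝ) (hGpos : G.PosDef) (c : ℝ) (hc : 0 ≤ c) :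
    volume {q : Fin 2 → ℝ | q ⬝ᵥ G.mulVec q ≤ c}
      = ENNReal.ofReal ((Real.sqrt G.det)⁻¹ * (π * c)) := by
  set S := CFC.sqrt G with hS
  have hSsd : S.PosSemidef := (CFC.sqrt_nonneg G).posSemidef
  have hmul : S * S = G := CFC.sqrt_mul_sqrt_self G hGpos.posSemidef.nonneg
  have hdet2 : S.det * S.det = G.det := by rw [← Matrix.det_mul, hmul]
  have hdetnn : 0 ≤ S.det := by
    exact hSsd.det_nonneg
  have hdetS : S.det = Real.sqrt G.det := by
    rw [← hdet2, Real.sqrt_mul_self hdetnn]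
  have hdetpos : 0 < Real.sqrt G.det := Real.sqrt_pos.mpr hGpos.det_pos
  have hSsymm : Sᵀ = S := hSsd.isHermitian
  have hquad : ∀ q : Fin 2 → ℝ, q ⬝ᵥ G.mulVec q = (S.mulVec q) ⬝ᵥ (S.mulVec q) := by
    intro q
    rw [← hmul, ← Matrix.mulVec_mulVec, Matrix.dotProduct_mulVec, ← Matrix.mulVec_transpose,
      hSsymm]
  have hEeq : {q : Fin 2 → ℝ | q ⬝ᵥ G.mulVec q ≤ c}
      = (Matrix.toLin' S) ⁻¹' {y : Fin 2 → ℝ | y ⬝ᵥ y ≤ c} := by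
    ext q
    simp only [Set.mem_setOf_eq, Set.mem_preimage, Matrix.toLin'_apply, hquad q]
  have hdetL : LinearMap.det (Matrix.toLin' S) ≠ 0 := by
    rw [LinearMap.det_toLin', hdetS]; exact hdetpos.ne'
  rw [hEeq, MeasureTheory.Measure.addHaar_preimage_linearMap volume hdetL,
    euclid_ball_vol' c hc, LinearMap.det_toLin', hdetS, abs_of_nonneg (by positivity),
    ← ENNReal.ofReal_mul (by positivity)]

end
/-- Inequality (ieqhelp) of Section 13: splitting the momentum integral at `p^u = δ` and
using the angular-momentum bound `r⁴⟨q, G q⟩ ≤ X` on the support of `f` together with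
`0 ≤ f ≤ F`, the particle current `N^u` is controlled by the energy flux `T_vv` plus a
small error: `N^u ≤ 4 Ω⁻⁴ δ⁻¹ T_vv + π F X r⁻² δ`. -/
theorem particle_current_estimate
    (G : Matrix (Fin 2) (Fin 2) ℝ) (hGsymm : G.IsSymm) (hGpos : G.PosDef)
    (r Ω δ : ℝ) (hr : 0 < r) (hΩ : 0 < Ω) (hδ : 0 < δ)
    (F X : ℝ) (hF : 0 ≤ F) (hX : 0 ≤ X)
    (f : ℝ × (Fin 2 → ℝ) → ℝ) (hfmeas : Measurable f)
    (hf0 : ∀ x ∈ Set.Ioi (0 : ℝ) ×ˢ (Set.univ : Set (Fin 2 → ℝ)), 0 ≤ f x)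
    (hfF : ∀ x ∈ Set.Ioi (0 : ℝ) ×ˢ (Set.univ : Set (Fin 2 → ℝ)), f x ≤ F)
    (hfsupp : ∀ x ∈ Set.Ioi (0 : ℝ) ×ˢ (Set.univ : Set (Fin 2 → ℝ)),
      r ^ 4 * (x.2 ⬝ᵥ G.mulVec x.2) > X → f x = 0) :
    (∫⁻ x in Set.Ioi (0 : ℝ) ×ˢ (Set.univ : Set (Fin 2 → ℝ)),
        ENNReal.ofReal (r ^ 2 * f x * Real.sqrt G.det))
      ≤ ENNReal.ofReal (4 * (Ω ^ 4)⁻¹ * δ⁻¹) *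
          (∫⁻ x in Set.Ioi (0 : ℝ) ×ˢ (Set.univ : Set (Fin 2 → ℝ)),
            ENNReal.ofReal (Ω ^ 4 / 4 * (r ^ 2 * x.1 * f x * Real.sqrt G.det)))
        + ENNReal.ofReal (π * F * X * (r ^ 2)⁻¹ * δ) := by
  have hr4 : (0:ℝ) < r ^ 4 := by positivity
  set c := X / r ^ 4 with hc_def
  have hc : 0 ≤ c := by positivity
  have hdetpos : 0 < Real.sqrt G.det := Real.sqrt_pos.mpr hGpos.det_pos
  set s : Set (ℝ × (Fin 2 → ℝ)) := Set.Ioi 0 ×ˢ Set.univ with hs_def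
  set E : Set (Fin 2 → ℝ) := {q | q ⬝ᵥ G.mulVec q ≤ c} with hE_def
  have hEmeas : MeasurableSet E :=
    (isClosed_le (quad_continuous' G) continuous_const).measurableSet
  set B : Set (ℝ × (Fin 2 → ℝ)) := Set.Ioc 0 δ ×ˢ E with hB_def
  have hBmeas : MeasurableSet B := measurableSet_Ioc.prod hEmeas
  set K1 : ENNReal := ENNReal.ofReal (4 * (Ω ^ 4)⁻¹ * δ⁻¹) with hK1
  set g : ℝ × (Fin 2 → ℝ) → ENNReal :=
    fun x => ENNReal.ofReal (Ω ^ 4 / 4 * (r ^ 2 * x.1 * f x * Real.sqrt G.det)) with hg_def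
  set cst : ENNReal := ENNReal.ofReal (r ^ 2 * F * Real.sqrt G.det) with hcst
  have hΩ4 : (0:ℝ) < Ω ^ 4 := by positivity
  have key : ∀ x ∈ s, ENNReal.ofReal (r ^ 2 * f x * Real.sqrt G.det)
      ≤ K1 * g x + B.indicator (fun _ => cst) x := by
    intro x hx
    have hx1 : 0 < x.1 := (Set.mem_prod.mp hx).1
    have hfx0 : 0 ≤ f x := hf0 x hx
    by_cases hxδ : δ < x.1
    · refine le_add_right ?_
      rw [hK1, hg_def, ← ENNReal.ofReal_mul (by positivity)]
      apply ENNReal.ofReal_le_ofReal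
      have h1 : 1 ≤ δ⁻¹ * x.1 := by
        rw [← div_eq_inv_mul, le_div_iff₀ hδ, one_mul]
        exact hxδ.le
      have heq : 4 * (Ω ^ 4)⁻¹ * δ⁻¹ * (Ω ^ 4 / 4 * (r ^ 2 * x.1 * f x * Real.sqrt G.det))
          = (δ⁻¹ * x.1) * (r ^ 2 * f x * Real.sqrt G.det) := by
        field_simp
      rw [heq]
      nlinarith [mul_nonneg (mul_nonneg (sq_nonneg r) hfx0) (Real.sqrt_nonneg G.det)]
    · push_neg at hxδ
      refine le_add_left ?_
      by_cases hq : X < r ^ 4 * (x.2 ⬝ᵥ G.mulVec x.2)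
      · rw [hfsupp x hx hq]
        simp
      · push_neg at hq
        have hxB : x ∈ B := by
          refine Set.mem_prod.mpr ⟨⟨hx1, hxδ⟩, ?_⟩
          rw [hE_def, Set.mem_setOf_eq, hc_def, le_div_iff₀ hr4]
          linarith [hq]
        rw [Set.indicator_of_mem hxB]
        exact ENNReal.ofReal_le_ofReal <|
          mul_le_mul_of_nonneg_right
            (mul_le_mul_of_nonneg_left (hfF x hx) (sq_nonneg r)) (Real.sqrt_nonneg G.det)
  have hvolB : volume B = ENNReal.ofReal δ * ENNReal.ofReal ((Real.sqrt G.det)⁻¹ * (π * c)) := by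
    rw [hB_def, MeasureTheory.Measure.volume_eq_prod, MeasureTheory.Measure.prod_prod,
      Real.volume_Ioc, ellipse_vol' G hGpos c hc, sub_zero]
  calc (∫⁻ x in s, ENNReal.ofReal (r ^ 2 * f x * Real.sqrt G.det))
      ≤ ∫⁻ x in s, (K1 * g x + B.indicator (fun _ => cst) x) := by
        apply setLIntegral_mono' (measurableSet_Ioi.prod MeasurableSet.univ) key
    _ = (∫⁻ x in s, K1 * g x) + ∫⁻ x in s, B.indicator (fun _ => cst) x := by
        apply lintegral_add_right
        exact measurable_const.indicator hBmeas
    _ ≤ K1 * (∫⁻ x in s, g x) + cst * volume B := by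
        gcongr
        · rw [lintegral_const_mul' K1 _ ENNReal.ofReal_ne_top]
        · calc (∫⁻ x in s, B.indicator (fun _ => cst) x)
              ≤ ∫⁻ x, B.indicator (fun _ => cst) x := setLIntegral_le_lintegral _ _
            _ ≤ cst * volume B := lintegral_indicator_const_le _ _
    _ ≤ K1 * (∫⁻ x in s, g x) + ENNReal.ofReal (π * F * X * (r ^ 2)⁻¹ * δ) := by
        gcongr
        rw [hvolB, hcst, ← ENNReal.ofReal_mul (by positivity),
          ← ENNReal.ofReal_mul (by positivity)]
        apply ENNReal.ofReal_le_ofReal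
        rw [hc_def]
        have h1 : r ^ 2 * F * Real.sqrt G.det * (δ * ((Real.sqrt G.det)⁻¹ * (π * (X / r ^ 4))))
            = π * F * X * (r ^ 2)⁻¹ * δ := by
          field_simp
        rw [h1]
end
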